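/- A tournament has a safe set of cardinality one if and only if it is transitive. Consequently a tournament T has s(T) = 1 if and only if T is acyclic. -/

import Mathlib

variable {V : Type*}

/-- Reachability inside a vertex subset `S` of the digraph with arc relation `A`. -/
def ReachIn (A : V → V → Prop) (S : Set V) : V → V → Prop :=
  Relation.ReflTransGen (fun u v => u ∈ S ∧ v ∈ S ∧ A u v)

/-- The sub-digraph induced on `S` is strongly connected. -/
def StrongIn (A : V → V → Prop) (S : Set V) : Prop :=
  ∀ u ∈ S, ∀ v ∈ S, ReachIn A S u v

/-- `M` is a strongly connected component of the sub-digraph induced on `S`. -/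
def IsSCCIn (A : V → V → Prop) (S M : Set V) : Prop :=
  ∃ v ∈ S, M = {u | u ∈ S ∧ ReachIn A S u v ∧ ReachIn A S v u}

/-- There is an arc from (some vertex of) `M` to (some vertex of) `N`. -/
def HasArc (A : V → V → Prop) (M N : Set V) : Prop :=
  ∃ u ∈ M, ∃ w ∈ N, A u w

/-- `S` is a safe set of the sub-digraph of `A` induced on `H`. -/
def SafeSetIn (A : V → V → Prop) (H S : Set V) : Prop :=
  S.Nonempty ∧ S ⊆ H ∧
    (∀ M, IsSCCIn A (H \ S) M → ∃ N, IsSCCIn A S N ∧ HasArc A M N) ∧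
    (∀ M N, IsSCCIn A (H \ S) M → IsSCCIn A S N → HasArc A M N → M.ncard ≤ N.ncard)

/-- `S` is a safe set of the digraph with arc relation `A`. -/
def SafeSet (A : V → V → Prop) (S : Set V) : Prop :=
  SafeSetIn A Set.univ S

/-- `S` is a strong safe set: a safe set inducing a strongly connected sub-digraph. -/
def StrongSafeSet (A : V → V → Prop) (S : Set V) : Prop :=
  SafeSet A S ∧ StrongIn A S

/-- A digraph is `k`-strong if it has at least `k+1` vertices and deleting any
fewer than `k` vertices leaves a strongly connected digraph. -/
def KStrong [Fintype V] (A : V → V → Prop) (k : ℕ) : Prop :=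
  k + 1 ≤ Fintype.card V ∧ ∀ X : Set V, X.ncard < k → StrongIn A Xᶜ

/-- An oriented graph: no loops and no 2-cycles. -/
def Oriented (A : V → V → Prop) : Prop :=
  ∀ u v, A u v → ¬ A v u

/-- A tournament: no loops, and exactly one arc between any two distinct vertices. -/
def IsTournament (A : V → V → Prop) : Prop :=
  (∀ v, ¬ A v v) ∧ ∀ u v : V, u ≠ v → (A u v ↔ ¬ A v u)

/-- An acyclic digraph: no arc lies on a directed cycle. -/
def AcyclicDigraph (A : V → V → Prop) : Prop :=
  ∀ u v, A u v → ¬ ReachIn A Set.univ v u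

/-- `S` is in-dominating: every vertex outside `S` has an out-neighbour in `S`. -/
def InDominating (A : V → V → Prop) (S : Set V) : Prop :=
  ∀ v, v ∉ S → ∃ w ∈ S, A v w

/-- An independent set of a digraph: no arc between any two of its vertices. -/
def IndepSet (A : V → V → Prop) (I : Set V) : Prop :=
  ∀ u ∈ I, ∀ v ∈ I, u ≠ v → ¬ A u v

noncomputable def outDeg (A : V → V → Prop) (v : V) : ℕ := {w | A v w}.ncard
noncomputable def inDeg (A : V → V → Prop) (v : V) : ℕ := {w | A w v}.ncard

/-- The safe number: minimum cardinality of a safe set. -/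
noncomputable def safeNum (A : V → V → Prop) : ℕ :=
  sInf {n | ∃ S : Set V, SafeSet A S ∧ S.ncard = n}

/-- The strong safe number: minimum cardinality of a strong safe set. -/
noncomputable def strongSafeNum (A : V → V → Prop) : ℕ :=
  sInf {n | ∃ S : Set V, StrongSafeSet A S ∧ S.ncard = n}

/-- The sub-digraph induced on `S` is acyclic. -/
def AcyclicIn (A : V → V → Prop) (S : Set V) : Prop :=
  ∀ u ∈ S, ∀ v ∈ S, A u v → ¬ ReachIn A S v u



private lemma reachIn_mono {A : V → V → Prop} {S T : Set V} (h : S ⊆ T) {u v : V}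
    (hr : ReachIn A S u v) : ReachIn A T u v := by
  unfold ReachIn at hr ⊢
  induction hr with
  | refl => exact Relation.ReflTransGen.refl
  | tail _ hab ih => exact ih.tail ⟨h hab.1, h hab.2.1, hab.2.2⟩

private lemma scc_of_singleton {A : V → V → Prop} {v : V} {N : Set V}
    (hN : IsSCCIn A {v} N) : N = {v} := by
  obtain ⟨w, hw, rfl⟩ := hN
  rcases hw with rfl
  ext u
  simp only [Set.mem_setOf_eq, Set.mem_singleton_iff]
  constructor
  · rintro ⟨h, -⟩; exact h
  · rintro rfl; exact ⟨rfl, Relation.ReflTransGen.refl, Relation.ReflTransGen.refl⟩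

private lemma scc_is_singleton_of_acyclic {A : V → V → Prop} (hac : AcyclicDigraph A)
    {S M : Set V} (hM : IsSCCIn A S M) : ∃ z ∈ S, M = {z} := by
  obtain ⟨z, hz, rfl⟩ := hM
  refine ⟨z, hz, ?_⟩
  ext u
  simp only [Set.mem_setOf_eq, Set.mem_singleton_iff]
  constructor
  · rintro ⟨huS, huz, hzu⟩
    rcases Relation.ReflTransGen.cases_head hzu with h | ⟨x, ⟨-, -, hzx⟩, hxu⟩
    · exact h.symm
    · exact absurd (reachIn_mono (Set.subset_univ S) (hxu.trans huz)) (hac z x hzx)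
  · rintro rfl; exact ⟨hz, Relation.ReflTransGen.refl, Relation.ReflTransGen.refl⟩

theorem stmt7 [Fintype V] [Nonempty V] (A : V → V → Prop) (hT : IsTournament A) :
    ((∃ S : Set V, SafeSet A S ∧ S.ncard = 1) ↔ AcyclicDigraph A) ∧
      (safeNum A = 1 ↔ AcyclicDigraph A) := by
  classical
  have main : (∃ S : Set V, SafeSet A S ∧ S.ncard = 1) ↔ AcyclicDigraph A := by
    constructor
    · rintro ⟨S, hS, hcard⟩
      obtain ⟨v, rfl⟩ := Set.ncard_eq_one.mp hcard
      obtain ⟨-, -, h1, h2⟩ := hS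
      -- the unique SCC of {v} is {v}
      have hvSCC : IsSCCIn A ({v} : Set V) {v} := by
        refine ⟨v, rfl, ?_⟩
        ext u
        simp only [Set.mem_singleton_iff, Set.mem_setOf_eq]
        constructor
        · rintro rfl; exact ⟨rfl, Relation.ReflTransGen.refl, Relation.ReflTransGen.refl⟩
        · rintro ⟨h, -⟩; exact h
      -- every SCC in the complement is a singleton {z} with an arc z → v
      have key : ∀ z : V, z ≠ v →
          ({u | u ∈ (Set.univ \ {v} : Set V) ∧ ReachIn A (Set.univ \ {v}) u z ∧
            ReachIn A (Set.univ \ {v}) z u} = {z}) ∧ A z v := by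
        intro z hz
        set M := {u | u ∈ (Set.univ \ {v} : Set V) ∧ ReachIn A (Set.univ \ {v}) u z ∧
            ReachIn A (Set.univ \ {v}) z u} with hMdef
        have hzM : z ∈ M := ⟨⟨trivial, hz⟩, Relation.ReflTransGen.refl,
          Relation.ReflTransGen.refl⟩
        have hMscc : IsSCCIn A (Set.univ \ {v}) M := ⟨z, ⟨trivial, hz⟩, rfl⟩
        obtain ⟨N, hN, harc⟩ := h1 M hMscc
        have hNv : N = {v} := scc_of_singleton hN
        have hle : M.ncard ≤ 1 := by
          have := h2 M N hMscc hN harc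
          rwa [hNv, Set.ncard_singleton] at this
        have hMz : M = {z} := by
          refine Set.eq_singleton_iff_unique_mem.mpr ⟨hzM, fun u hu => ?_⟩
          by_contra hne
          have hsub : ({u, z} : Set V) ⊆ M := by
            rintro x (rfl | rfl); exact hu; exact hzM
          have : (2 : ℕ) ≤ M.ncard := by
            have h2' : ({u, z} : Set V).ncard = 2 := Set.ncard_pair hne
            calc (2:ℕ) = ({u, z} : Set V).ncard := h2'.symm
              _ ≤ M.ncard := Set.ncard_le_ncard hsub (Set.toFinite M)
          omega
        obtain ⟨a, ha, b, hb, hab⟩ := harc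
        rw [hMz] at ha
        rw [hNv] at hb
        rcases ha with rfl
        rcases hb with rfl
        exact ⟨hMz, hab⟩
      -- v is a sink: no arcs out of v
      have hsink : ∀ z, ¬ A v z := by
        intro z hvz
        rcases eq_or_ne z v with rfl | hz
        · exact hT.1 z hvz
        · exact ((hT.2 z v hz).mp ((key z hz).2)) hvz
      -- the complement of v is acyclic
      have hacIn : ∀ x y : V, x ≠ v → A x y → ¬ ReachIn A (Set.univ \ {v}) y x := by
        intro x y hx hxy hyx
        have hy : y ≠ v := fun h => hsink x (by
          -- if y = v then A x v; that's fine, but then hyx starts at v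
          exact absurd hxy (by
            subst h
            rcases Relation.ReflTransGen.cases_head hyx with h' | ⟨c, ⟨-, hc, hvc⟩, -⟩
            · exact fun _ => hx h'.symm
            · exact fun _ => hsink c hvc))
        have hyMx : y ∈ ({u | u ∈ (Set.univ \ {v} : Set V) ∧
            ReachIn A (Set.univ \ {v}) u x ∧ ReachIn A (Set.univ \ {v}) x u}) := by
          refine ⟨⟨trivial, hy⟩, hyx, Relation.ReflTransGen.single ⟨⟨trivial, hx⟩, ⟨trivial, hy⟩, hxy⟩⟩
        rw [(key x hx).1] at hyMx
        have hyx' : y = x := hyMx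
        exact hT.1 x (hyx' ▸ hxy)
      -- conclude acyclicity
      intro u w huw hwu
      have hu : u ≠ v := fun h => hsink w (h ▸ huw)
      have hw : w ≠ v := by
        rintro rfl
        rcases Relation.ReflTransGen.cases_head hwu with h' | ⟨c, ⟨-, -, hvc⟩, -⟩
        · exact hu h'.symm
        · exact hsink c hvc
      -- transfer the path to the complement of v
      have transfer : ∀ a b : V, ReachIn A Set.univ a b → b ≠ v →
          ReachIn A (Set.univ \ {v}) a b := by
        intro a b hab hb
        induction hab using Relation.ReflTransGen.head_induction_on with
        | refl => exact Relation.ReflTransGen.refl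
        | head step rest ih =>
          rename_i p q
          obtain ⟨-, -, hpq⟩ := step
          have hp : p ≠ v := fun h => hsink q (h ▸ hpq)
          have hq : q ≠ v := by
            rintro rfl
            rcases Relation.ReflTransGen.cases_head rest with h' | ⟨c, ⟨-, -, hvc⟩, -⟩
            · exact hb h'.symm
            · exact hsink c hvc
          exact Relation.ReflTransGen.head ⟨⟨trivial, hp⟩, ⟨trivial, hq⟩, hpq⟩ ih
      exact hacIn u w hu huw (transfer w u hwu hu)
    · intro hac
      -- find a sink: vertex of maximum in-degree
      obtain ⟨v, -, hv⟩ := Finset.exists_max_image (Finset.univ : Finset V)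
        (fun x => {w | A w x}.ncard) ⟨Classical.arbitrary V, Finset.mem_univ _⟩
      have hsink : ∀ u, u ≠ v → A u v := by
        intro u hu
        by_contra huv
        have hvu : A v u := not_not.mp (fun h => huv ((hT.2 u v hu).mpr h))
        -- every in-neighbour of v is an in-neighbour of u
        have hsub : {w | A w v} ⊆ {w | A w u} := by
          intro w hwv
          by_contra hwu
          have hwne : w ≠ u := fun h => huv (h ▸ hwv)
          have huw : A u w := (hT.2 u w hwne.symm).mpr hwu
          have : ReachIn A Set.univ u v :=
            Relation.ReflTransGen.head ⟨trivial, trivial, huw⟩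
              (Relation.ReflTransGen.single ⟨trivial, trivial, hwv⟩)
          exact hac v u hvu this
        have hss : {w | A w v} ⊂ {w | A w u} := by
          refine ⟨hsub, fun hsub' => ?_⟩
          exact hT.1 v (hsub' hvu)
        have := Set.ncard_lt_ncard hss (Set.toFinite _)
        have := hv u (Finset.mem_univ u)
        omega
      refine ⟨{v}, ⟨⟨v, rfl⟩, Set.subset_univ _, ?_, ?_⟩, Set.ncard_singleton v⟩
      · intro M hM
        obtain ⟨z, hzS, rfl⟩ := scc_is_singleton_of_acyclic hac hM
        refine ⟨{v}, ?_, z, rfl, v, rfl, hsink z hzS.2⟩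
        refine ⟨v, rfl, ?_⟩
        ext u
        simp only [Set.mem_singleton_iff, Set.mem_setOf_eq]
        constructor
        · rintro rfl; exact ⟨rfl, Relation.ReflTransGen.refl, Relation.ReflTransGen.refl⟩
        · rintro ⟨h, -⟩; exact h
      · intro M N hM hN _
        obtain ⟨z, -, rfl⟩ := scc_is_singleton_of_acyclic hac hM
        rw [scc_of_singleton hN]
        simp [Set.ncard_singleton]
  refine ⟨main, ?_, ?_⟩
  · intro h
    have hne : {n | ∃ S : Set V, SafeSet A S ∧ S.ncard = n}.Nonempty := by
      by_contra hcon
      rw [Set.not_nonempty_iff_eq_empty] at hcon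
      rw [safeNum, hcon, Nat.sInf_empty] at h
      exact one_ne_zero h.symm
    have := Nat.sInf_mem hne
    rw [show sInf {n | ∃ S : Set V, SafeSet A S ∧ S.ncard = n} = safeNum A from rfl, h] at this
    exact main.mp this
  · intro hac
    obtain ⟨S, hS, hc⟩ := main.mpr hac
    have h1 : 1 ∈ {n | ∃ S : Set V, SafeSet A S ∧ S.ncard = n} := ⟨S, hS, hc⟩
    have hle : safeNum A ≤ 1 := Nat.sInf_le h1
    have hmem := Nat.sInf_mem ⟨1, h1⟩
    obtain ⟨S', hS', hc'⟩ := hmem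
    have hpos : 0 < S'.ncard := (Set.ncard_pos (Set.toFinite S')).mpr hS'.1
    rw [show sInf {n | ∃ S : Set V, SafeSet A S ∧ S.ncard = n} = safeNum A from rfl] at hc'
    omega
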